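/- Let G = (V,E) be a finite loopless directed graph such that (u,v) ∈ E implies (v,u) ∈ E, and let 𝒜 = 𝒜(G) be the associated Boolean matrix indexed by V ∪ E. Let S ⊆ (V ∪ E) × (V ∪ E) be a set of positions of cardinality |E| + h such that the entries 𝒜_{ij} with (i,j) running over S form a fooling set. Then S contains at least h elements of the form (w,w) with w ∈ V. -/

import Mathlib

/-- Entries of a Boolean matrix `A` at the positions in `S` form a fooling set:
`A p.1 q.2 = A q.1 p.2 = 1` holds exactly when the positions coincide. -/
def IsFoolingSet {α β : Type*} (A : Matrix α β Bool) (S : Finset (α × β)) : Prop :=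
  ∀ p ∈ S, ∀ q ∈ S, (A p.1 q.2 = true ∧ A q.1 p.2 = true) ↔ p = q

/-- The fooling set number of a Boolean matrix: the largest cardinality of a fooling set. -/
noncomputable def foolingSetNumber {α β : Type*} (A : Matrix α β Bool) : ℕ :=
  sSup {n | ∃ S : Finset (α × β), IsFoolingSet A S ∧ S.card = n}

/-- A square Boolean matrix is sign-nonsingular if some permutation `τ` picks out all-one
entries, and every permutation doing so has the same sign as `τ`. -/
def SignNonsingular {ι : Type*} [Fintype ι] [DecidableEq ι] (A : Matrix ι ι Bool) : Prop :=
  ∃ τ : Equiv.Perm ι, (∀ i, A i (τ i) = true) ∧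
    ∀ σ : Equiv.Perm ι, (∀ i, A i (σ i) = true) → Equiv.Perm.sign σ = Equiv.Perm.sign τ

/-- The determinantal rank of a Boolean matrix: the size of its largest
sign-nonsingular square submatrix. -/
noncomputable def detRank {α β : Type*} (A : Matrix α β Bool) : ℕ :=
  sSup {k | ∃ r : Fin k → α, ∃ c : Fin k → β,
    Function.Injective r ∧ Function.Injective c ∧ SignNonsingular (A.submatrix r c)}
/-- The Boolean matrix `𝒜(G)` of a symmetric loopless directed graph `G = (V, E)`,
with rows and columns indexed by `V ⊕ E`. -/
def adjMat {V : Type*} [DecidableEq V] (E : Finset (V × V)) :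
    Matrix (V ⊕ {e : V × V // e ∈ E}) (V ⊕ {e : V × V // e ∈ E}) Bool :=
  fun x y =>
    match x, y with
    | Sum.inl u, Sum.inl v => decide (u = v ∨ (u, v) ∈ E)
    | Sum.inl u, Sum.inr e => decide (e.val.1 = u)
    | Sum.inr e, Sum.inl v => decide (e.val.2 = v)
    | Sum.inr e, Sum.inr f => decide (e = f)

/-- If the entries of `𝒜(G)` at the positions in `S` form a fooling set and `|S| = |E| + h`,
then `S` contains at least `h` positions of the form `(w, w)` with `w ∈ V`. -/
theorem foolingSet_diag_vertices_card {V : Type*} [Fintype V] [DecidableEq V]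
    (E : Finset (V × V)) (hloop : ∀ p ∈ E, p.1 ≠ p.2)
    (hsymm : ∀ u v : V, (u, v) ∈ E → (v, u) ∈ E)
    (S : Finset ((V ⊕ {e : V × V // e ∈ E}) × (V ⊕ {e : V × V // e ∈ E})))
    (hS : IsFoolingSet (adjMat E) S) (h : ℕ) (hcard : S.card = E.card + h) :
    h ≤ (S.filter fun p => ∃ w : V, p = (Sum.inl w, Sum.inl w)).card := by
  classical
  have hsplit := Finset.card_filter_add_card_filter_not
    (s := S) (p := fun p => ∃ w : V, p = (Sum.inl w, Sum.inl w))
  have hTE : (S.filter fun p => ¬ ∃ w : V, p = (Sum.inl w, Sum.inl w)).card ≤ E.card := by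
    apply Finset.card_le_card_of_injOn (f := fun p =>
      match p with
      | (Sum.inl u, Sum.inl v) => (u, v)
      | (Sum.inl _, Sum.inr f) => f.val
      | (Sum.inr e, _) => e.val)
    · intro p hp
      simp only [Finset.mem_coe, Finset.mem_filter] at hp
      obtain ⟨hpS, hpd⟩ := hp
      have h1 : (adjMat E) p.1 p.2 = true := ((hS p hpS p hpS).mpr rfl).1
      obtain ⟨x | e, y | f⟩ := p
      · simp only [adjMat, decide_eq_true_eq] at h1
        rcases h1 with rfl | h1
        · exact absurd ⟨x, rfl⟩ hpd
        · exact h1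
      · exact f.prop
      · exact e.prop
      · exact e.prop
    · intro p hp q hq hfpq
      simp only [Finset.coe_filter, Set.mem_setOf_eq] at hp hq
      have h1 : (adjMat E) p.1 p.2 = true := ((hS p hp.1 p hp.1).mpr rfl).1
      have h2 : (adjMat E) q.1 q.2 = true := ((hS q hq.1 q hq.1).mpr rfl).1
      apply (hS p hp.1 q hq.1).mp
      clear hS
      obtain ⟨⟨hpS, hpd⟩, ⟨hqS, hqd⟩⟩ := And.intro hp hq
      clear hp hq hpS hqS hcard hsplit
      obtain ⟨x | e, y | f⟩ := p <;> obtain ⟨a | g, b | k⟩ := q <;>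
        simp only [adjMat, decide_eq_true_eq, Prod.ext_iff, not_exists, Prod.mk.injEq,
          Sum.inl.injEq, Subtype.ext_iff] at h1 h2 hfpq hpd hqd ⊢ <;>
        aesop
  omega
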